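/- Let α > 1 and let μ, γ, d₀, σ, r, T₀ be positive reals with γ < 4μ. Then the series Σ_{i=0}^{∞} exp( − d₀²·α^{2μ·i} / (σ·r·√(2π·T₀·α^{γ·i})) ) converges. -/

import Mathlib

open Real

theorem stmt_16 (α μ γ d₀ σ r T₀ : ℝ) (hα : 1 < α) (hμ : 0 < μ) (hγ : 0 < γ)
    (hd₀ : 0 < d₀) (hσ : 0 < σ) (hr : 0 < r) (hT₀ : 0 < T₀) (hγμ : γ < 4 * μ) :
    Summable (fun i : ℕ =>
      Real.exp (-(d₀ ^ 2 * α ^ (2 * μ * i)) /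
        (σ * r * Real.sqrt (2 * π * (T₀ * α ^ (γ * i)))))) := by
  have hα0 : (0 : ℝ) < α := lt_trans one_pos hα
  have hπ : (0 : ℝ) < π := Real.pi_pos
  set ε : ℝ := 2 * μ - γ / 2 with hεdef
  have hε0 : 0 < ε := by simp only [hεdef]; linarith
  set C : ℝ := d₀ ^ 2 / (σ * r * Real.sqrt (2 * π * T₀)) with hCdef
  have hC : 0 < C := by
    apply div_pos (by positivity)
    have : 0 < Real.sqrt (2 * π * T₀) := Real.sqrt_pos.mpr (by positivity)
    positivity
  set b : ℝ := α ^ ε with hbdef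
  have hb1 : 1 < b := Real.one_lt_rpow_iff hα0.le |>.mpr (Or.inl ⟨hα, hε0⟩)
  have key : ∀ i : ℕ, (d₀ ^ 2 * α ^ (2 * μ * i)) /
      (σ * r * Real.sqrt (2 * π * (T₀ * α ^ (γ * i)))) = C * b ^ i := by
    intro i
    have hpow : (0 : ℝ) ≤ α ^ (γ * i) := (Real.rpow_pos_of_pos hα0 _).le
    have hsq : Real.sqrt (2 * π * (T₀ * α ^ (γ * i))) =
        Real.sqrt (2 * π * T₀) * α ^ (γ * i / 2) := by
      have h2 : Real.sqrt (α ^ (γ * i)) = α ^ (γ * i / 2) := by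
        rw [Real.sqrt_eq_rpow, ← Real.rpow_mul hα0.le]
        ring_nf
      rw [show 2 * π * (T₀ * α ^ (γ * i)) = (2 * π * T₀) * α ^ (γ * i) by ring,
        Real.sqrt_mul (by positivity), h2]
    rw [hsq]
    have hb : b ^ i = α ^ (ε * i) := by
      rw [hbdef, ← Real.rpow_natCast (α ^ ε) i, ← Real.rpow_mul hα0.le]
    rw [hb]
    have hsplit : α ^ (2 * μ * i) = α ^ (ε * i) * α ^ (γ * i / 2) := by
      rw [← Real.rpow_add hα0]
      congr 1
      simp only [hεdef]; ring
    rw [hsplit, hCdef]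
    have h1 : (0 : ℝ) < Real.sqrt (2 * π * T₀) := Real.sqrt_pos.mpr (by positivity)
    have h2 : (0 : ℝ) < α ^ (γ * i / 2) := Real.rpow_pos_of_pos hα0 _
    field_simp
  have hρ : Real.exp (-(C * (b - 1))) < 1 := by
    rw [Real.exp_lt_one_iff]
    have : 0 < C * (b - 1) := mul_pos hC (by linarith)
    linarith
  have hρ0 : 0 ≤ Real.exp (-(C * (b - 1))) := (Real.exp_pos _).le
  refine Summable.of_nonneg_of_le (fun i => (Real.exp_pos _).le) ?_
    (Summable.mul_left (Real.exp (-C)) (summable_geometric_of_lt_one hρ0 hρ))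
  · intro i
    have hbi : 1 + (i : ℝ) * (b - 1) ≤ b ^ i := by
      have := one_add_mul_le_pow (by linarith : (-2 : ℝ) ≤ b - 1) i
      have he : (1 + (b - 1)) = b := by ring
      rw [he] at this
      linarith
    have harg : -(d₀ ^ 2 * α ^ (2 * μ * i)) /
        (σ * r * Real.sqrt (2 * π * (T₀ * α ^ (γ * i)))) ≤
        -C + (i : ℝ) * (-(C * (b - 1))) := by
      rw [neg_div, key i]
      nlinarith [hbi, hC]
    calc Real.exp (-(d₀ ^ 2 * α ^ (2 * μ * i)) /
          (σ * r * Real.sqrt (2 * π * (T₀ * α ^ (γ * i)))))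
        ≤ Real.exp (-C + (i : ℝ) * (-(C * (b - 1)))) := Real.exp_le_exp.mpr harg
      _ = Real.exp (-C) * (Real.exp (-(C * (b - 1)))) ^ i := by
          rw [Real.exp_add, Real.exp_nat_mul]
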